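/- The kernel of the linear map D_H : O(m,n;t) → W(m,n;t) is the one-dimensional subspace F·1 spanned by the constants. -/

import Mathlib

open Finsupp Finset

namespace HamSup

variable (F : Type) [Field F]

/-- Monomial index: a multi-exponent for the divided power part and a set of odd indices. -/
abbrev Mono (m n : ℕ) := (Fin m → ℕ) × Finset (Fin n)

/-- The superalgebra `O(m,n)` as the free module on monomials `x^(α) x^u`. -/
abbrev O (m n : ℕ) := Mono m n →₀ F

variable {m n : ℕ}

/-- The basis monomial `x^(α) x^u`. -/
noncomputable def X (μ : Mono m n) : O F m n := Finsupp.single μ 1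

/-- Linear extension of a map defined on basis monomials. -/
noncomputable def extend {N : Type} [AddCommGroup N] [Module F N]
    (v : Mono m n → N) : O F m n →ₗ[F] N :=
  Finsupp.lsum F fun μ => LinearMap.toSpanSingleton F N (v μ)

/-- Number of inversions when concatenating `x^u` and `x^v`. -/
def invCount (u v : Finset (Fin n)) : ℕ :=
  ((u ×ˢ v).filter fun q => q.2 < q.1).card

/-- Product of two basis monomials: divided-power binomial coefficients on the even part and
a sign (with nilpotency) on the exterior part. -/
noncomputable def mulMono (μ ν : Mono m n) : O F m n :=
  if Disjoint μ.2 ν.2 then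
    (((-1 : F) ^ invCount μ.2 ν.2) * ∏ i, ((μ.1 i + ν.1 i).choose (μ.1 i) : F)) •
      X F (μ.1 + ν.1, μ.2 ∪ ν.2)
  else 0

/-- The multiplication of `O(m,n)` as a bilinear map. -/
noncomputable def mulO : O F m n →ₗ[F] O F m n →ₗ[F] O F m n :=
  extend F fun μ => extend F (mulMono F μ)

/-- Even partial derivative `∂_i`, `i ∈ I₀`. -/
noncomputable def pdE (i : Fin m) : O F m n →ₗ[F] O F m n :=
  extend F fun μ =>
    if μ.1 i = 0 then 0 else X F (Function.update μ.1 i (μ.1 i - 1), μ.2)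

/-- Odd partial derivative `∂_j`, `j ∈ I₁`. -/
noncomputable def pdO (j : Fin n) : O F m n →ₗ[F] O F m n :=
  extend F fun μ =>
    if j ∈ μ.2 then ((-1 : F) ^ (μ.2.filter fun k => k < j).card) • X F (μ.1, μ.2.erase j)
    else 0

/-- Partial derivative indexed by `I = I₀ ⊔ I₁`. -/
noncomputable def pd (i : Fin m ⊕ Fin n) : O F m n →ₗ[F] O F m n :=
  Sum.elim (pdE F) (pdO F) i

/-- Parity `μ(i)` of an index. -/
def idxPar : Fin m ⊕ Fin n → ℕ := Sum.elim (fun _ => 0) (fun _ => 1)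

/-- The sign `τ(i)`. -/
def tau (r : ℕ) : Fin m ⊕ Fin n → ℤ :=
  Sum.elim (fun i => if (i : ℕ) < r then 1 else -1) (fun _ => 1)

/-- The basis vector field `x^(α) x^u ∂_i` of the Witt superalgebra, as an endomorphism. -/
noncomputable def fD (μ : Mono m n) (i : Fin m ⊕ Fin n) : Module.End F (O F m n) :=
  (mulO F (X F μ)).comp (pd F i)

/-- `D_H(x^(α)x^u) = Σ_i τ(i)(−1)^{μ(i)p(f)} ∂_i(f) ∂_{i'}` on a basis monomial. -/
noncomputable def DHmono (r : ℕ) (pr : Fin m ⊕ Fin n → Fin m ⊕ Fin n) (μ : Mono m n) :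
    Module.End F (O F m n) :=
  ∑ i : Fin m ⊕ Fin n,
    (((tau r i : ℤ) : F) * (-1 : F) ^ (idxPar i * μ.2.card)) •
      ((mulO F (pd F i (X F μ))).comp (pd F (pr i)))

/-- The Hamiltonian map `D_H` as a linear map. -/
noncomputable def DH (r : ℕ) (pr : Fin m ⊕ Fin n → Fin m ⊕ Fin n) :
    O F m n →ₗ[F] Module.End F (O F m n) :=
  extend F (DHmono F r pr)

/-- Truncation condition `α ∈ A(m;t)`, i.e. `α_i ≤ π_i = p^{t_i} − 1`. -/
def inA (p : ℕ) (t : Fin m → ℕ) (α : Fin m → ℕ) : Prop := ∀ i, α i < p ^ t i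

/-- The tuple `π`. -/
def piF (p : ℕ) (t : Fin m → ℕ) : Fin m → ℕ := fun i => p ^ t i - 1

/-- The truncated algebra `O(m,n;t)` as a subspace. -/
noncomputable def Ot (p : ℕ) (t : Fin m → ℕ) : Submodule F (O F m n) :=
  Submodule.span F {x | ∃ μ : Mono m n, inA p t μ.1 ∧ x = X F μ}

/-- The even part `H₀̄` of the Hamiltonian superalgebra. -/
noncomputable def H0 (p r : ℕ) (t : Fin m → ℕ) (pr : Fin m ⊕ Fin n → Fin m ⊕ Fin n) :
    Submodule F (Module.End F (O F m n)) :=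
  Submodule.span F {x | ∃ μ : Mono m n, inA p t μ.1 ∧ Even μ.2.card ∧
    ¬(μ.1 = piF p t ∧ μ.2 = Finset.univ) ∧ x = DHmono F r pr μ}

/-- The codimension-one ideal `J` of `H₀̄`. -/
noncomputable def Jid (p r : ℕ) (t : Fin m → ℕ) (pr : Fin m ⊕ Fin n → Fin m ⊕ Fin n) :
    Submodule F (Module.End F (O F m n)) :=
  Submodule.span F {x | ∃ μ : Mono m n, inA p t μ.1 ∧ Even μ.2.card ∧
    ¬(μ.1 = piF p t ∧ μ.2 = Finset.univ) ∧ ¬(μ.1 = piF p t ∧ μ.2 = ∅) ∧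
    x = DHmono F r pr μ}

/-- The odd part `W₁̄` of the Witt superalgebra `W(m,n;t)`. -/
noncomputable def W1 (p : ℕ) (t : Fin m → ℕ) : Submodule F (Module.End F (O F m n)) :=
  Submodule.span F {x | ∃ (μ : Mono m n) (i : Fin m ⊕ Fin n), inA p t μ.1 ∧
    Odd (μ.2.card + idxPar i) ∧ x = fD F μ i}

/-- The `ℤ`-degree-`k` component of `W(m,n;t)`. -/
noncomputable def Wcomp (p : ℕ) (t : Fin m → ℕ) (k : ℤ) :
    Submodule F (Module.End F (O F m n)) :=
  Submodule.span F {x | ∃ (μ : Mono m n) (i : Fin m ⊕ Fin n), inA p t μ.1 ∧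
    (((∑ l, μ.1 l : ℕ) : ℤ) + (μ.2.card : ℤ)) - 1 = k ∧ x = fD F μ i}

/-- The iterated adjoint action `(ad D)^k (E)`. -/
noncomputable def adIter (D : Module.End F (O F m n)) (k : ℕ)
    (E : Module.End F (O F m n)) : Module.End F (O F m n) :=
  (fun E => D * E - E * D)^[k] E

end HamSup


namespace HamSupAux

open HamSup

variable {F : Type} [Field F] {m n : ℕ}

lemma extend_X {N : Type} [AddCommGroup N] [Module F N] (v : Mono m n → N) (μ : Mono m n) :
    extend F v (X F μ) = v μ := by
  simp [extend, X, Finsupp.lsum_single, LinearMap.toSpanSingleton_apply]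

lemma single_eq_smul_X (μ : Mono m n) (a : F) :
    (Finsupp.single μ a : O F m n) = a • X F μ := by
  rw [X, Finsupp.smul_single', mul_one]

lemma lmap_apply_sum {N : Type} [AddCommGroup N] [Module F N] (L : O F m n →ₗ[F] N)
    (f : O F m n) : L f = f.sum fun μ a => a • L (X F μ) := by
  conv_lhs => rw [← Finsupp.sum_single f]
  rw [map_finsuppSum]
  refine Finsupp.sum_congr fun μ _ => ?_
  rw [single_eq_smul_X, map_smul]

lemma mulMono_one (μ : Mono m n) :
    mulMono F μ ((0 : Fin m → ℕ), (∅ : Finset (Fin n))) = X F μ := by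
  rw [mulMono, if_pos (Finset.disjoint_empty_right _)]
  simp [invCount]

lemma mulO_X_X (μ ν : Mono m n) : mulO F (X F μ) (X F ν) = mulMono F μ ν := by
  rw [mulO, extend_X, extend_X]

lemma mulO_one (g : O F m n) :
    mulO F g (X F ((0 : Fin m → ℕ), (∅ : Finset (Fin n)))) = g := by
  induction g using Finsupp.induction_linear with
  | zero => simp
  | add f g hf hg => rw [map_add, LinearMap.add_apply, hf, hg]
  | single a b =>
      rw [single_eq_smul_X, map_smul, LinearMap.smul_apply, mulO_X_X, mulMono_one]

lemma pdE_X (i : Fin m) (μ : Mono m n) :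
    pdE F i (X F μ) =
      if μ.1 i = 0 then 0 else X F (Function.update μ.1 i (μ.1 i - 1), μ.2) :=
  extend_X _ _

lemma pdO_X (j : Fin n) (μ : Mono m n) :
    pdO F j (X F μ) = if j ∈ μ.2 then
      ((-1 : F) ^ (μ.2.filter fun k => k < j).card) • X F (μ.1, μ.2.erase j) else 0 :=
  extend_X _ _

lemma DH_X (r : ℕ) (pr : Fin m ⊕ Fin n → Fin m ⊕ Fin n) (μ : Mono m n) :
    DH F r pr (X F μ) = DHmono F r pr μ := extend_X _ _

lemma DHmono_apply_even (r : ℕ) (prE : Fin m → Fin m) (prO : Fin n → Fin n)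
    (hE : Function.Injective prE) (i : Fin m) (μ : Mono m n) :
    DHmono F r (Sum.map prE prO) μ (X F (Pi.single (prE i) 1, (∅ : Finset (Fin n)))) =
      ((tau r (Sum.inl i : Fin m ⊕ Fin n) : ℤ) : F) • pdE F i (X F μ) := by
  rw [DHmono, LinearMap.sum_apply]
  rw [Finset.sum_eq_single (Sum.inl i : Fin m ⊕ Fin n)]
  · rw [LinearMap.smul_apply, LinearMap.comp_apply]
    have h1 : pd F (Sum.map prE prO (Sum.inl i))
        (X F (Pi.single (prE i) 1, (∅ : Finset (Fin n)))) =
        X F ((0 : Fin m → ℕ), (∅ : Finset (Fin n))) := by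
      show pdE F (prE i) _ = _
      rw [pdE_X]
      dsimp only
      have hval : (Pi.single (prE i) 1 : Fin m → ℕ) (prE i) = 1 := Pi.single_eq_same _ _
      rw [if_neg (by simp [hval])]
      have hupd : Function.update (Pi.single (prE i) 1 : Fin m → ℕ) (prE i) (1 - 1) =
          (0 : Fin m → ℕ) := by
        funext k
        by_cases hk : k = prE i <;>
          simp [Function.update_apply, hk, Pi.single_apply]
      rw [hval, hupd]
    rw [h1, mulO_one]
    simp [idxPar, pd]
  · intro k _ hk
    have hz : pd F (Sum.map prE prO k)
        (X F (Pi.single (prE i) 1, (∅ : Finset (Fin n)))) = 0 := by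
      cases k with
      | inl a =>
          show pdE F (prE a) _ = 0
          rw [pdE_X]
          have ha : a ≠ i := fun h => hk (by rw [h])
          have : prE a ≠ prE i := fun h => ha (hE h)
          simp [Pi.single_apply, this]
      | inr b =>
          show pdO F (prO b) _ = 0
          rw [pdO_X]
          simp
    rw [LinearMap.smul_apply, LinearMap.comp_apply, hz, map_zero, smul_zero]
  · intro h
    exact absurd (Finset.mem_univ _) h

lemma DHmono_apply_odd (r : ℕ) (prE : Fin m → Fin m) (prO : Fin n → Fin n)
    (hO : Function.Injective prO) (j : Fin n) (μ : Mono m n) :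
    DHmono F r (Sum.map prE prO) μ (X F ((0 : Fin m → ℕ), ({prO j} : Finset (Fin n)))) =
      ((-1 : F) ^ μ.2.card) • pdO F j (X F μ) := by
  rw [DHmono, LinearMap.sum_apply]
  rw [Finset.sum_eq_single (Sum.inr j : Fin m ⊕ Fin n)]
  · rw [LinearMap.smul_apply, LinearMap.comp_apply]
    have h1 : pd F (Sum.map prE prO (Sum.inr j))
        (X F ((0 : Fin m → ℕ), ({prO j} : Finset (Fin n)))) =
        X F ((0 : Fin m → ℕ), (∅ : Finset (Fin n))) := by
      show pdO F (prO j) _ = _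
      rw [pdO_X]
      dsimp only
      rw [if_pos (Finset.mem_singleton_self _)]
      have h2 : (({prO j} : Finset (Fin n)).filter fun k => k < prO j) = ∅ := by
        rw [Finset.filter_singleton, if_neg (lt_irrefl _)]
      rw [h2]
      simp [Finset.erase_singleton]
    rw [h1, mulO_one]
    simp [idxPar, tau, pd]
  · intro k _ hk
    have hz : pd F (Sum.map prE prO k)
        (X F ((0 : Fin m → ℕ), ({prO j} : Finset (Fin n)))) = 0 := by
      cases k with
      | inl a =>
          show pdE F (prE a) _ = 0
          rw [pdE_X]
          simp
      | inr b =>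
          show pdO F (prO b) _ = 0
          have hb : b ≠ j := fun h => hk (by rw [h])
          have : prO b ≠ prO j := fun h => hb (hO h)
          rw [pdO_X]
          simp [this]
    rw [LinearMap.smul_apply, LinearMap.comp_apply, hz, map_zero, smul_zero]
  · intro h
    exact absurd (Finset.mem_univ _) h

lemma DH_apply (r : ℕ) (pr : Fin m ⊕ Fin n → Fin m ⊕ Fin n) (f : O F m n) (T : O F m n) :
    DH F r pr f T = f.sum fun μ a => a • DHmono F r pr μ T := by
  rw [DH, extend, Finsupp.lsum_apply, LinearMap.finsupp_sum_apply]
  refine Finsupp.sum_congr fun μ _ => ?_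
  rw [LinearMap.toSpanSingleton_apply, LinearMap.smul_apply]

lemma DH_apply_even (r : ℕ) (prE : Fin m → Fin m) (prO : Fin n → Fin n)
    (hE : Function.Injective prE) (i : Fin m) (f : O F m n) :
    DH F r (Sum.map prE prO) f (X F ((Pi.single (prE i) 1 : Fin m → ℕ), (∅ : Finset (Fin n)))) =
      ((tau r (Sum.inl i : Fin m ⊕ Fin n) : ℤ) : F) • pdE F i f := by
  rw [DH_apply, lmap_apply_sum (pdE F i) f, Finsupp.smul_sum]
  refine Finsupp.sum_congr fun μ _ => ?_
  rw [DHmono_apply_even r prE prO hE i μ, smul_comm]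

lemma DH_apply_odd (r : ℕ) (prE : Fin m → Fin m) (prO : Fin n → Fin n)
    (hO : Function.Injective prO) (j : Fin n) (f : O F m n) :
    DH F r (Sum.map prE prO) f (X F ((0 : Fin m → ℕ), ({prO j} : Finset (Fin n)))) =
      f.sum fun μ a => (a * (-1 : F) ^ μ.2.card) • pdO F j (X F μ) := by
  rw [DH_apply]
  refine Finsupp.sum_congr fun μ _ => ?_
  rw [DHmono_apply_odd r prE prO hO j μ, smul_smul]

end HamSupAux


open HamSup in
/-- `Ker(D_H : O(m,n;t) → W(m,n;t)) = F·1`. -/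
theorem ker_DH (F : Type) [Field F] (m n p : ℕ) (hp : p.Prime) (h3 : 3 < p)
    (hchar : ringChar F = p) (r s : ℕ) (hm : m = 2 * r) (hn : n = 2 * s ∨ n = 2 * s + 1)
    (t : Fin m → ℕ) (ht : ∀ i, 0 < t i)
    (prE : Fin m → Fin m)
    (hprE : ∀ i : Fin m, (prE i : ℕ) = if (i : ℕ) < r then (i : ℕ) + r else (i : ℕ) - r)
    (prO : Fin n → Fin n)
    (hprO : ∀ j : Fin n, (prO j : ℕ) =
      if (j : ℕ) < s then (j : ℕ) + s else if (j : ℕ) < 2 * s then (j : ℕ) - s else (j : ℕ)) :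
    ∀ f : O F m n, f ∈ Ot F p t →
      (DH F r (Sum.map prE prO) f = 0 ↔ ∃ c : F, f = c • X F ((0 : Fin m → ℕ), (∅ : Finset (Fin n)))) := by
  intro f hf
  have hEinv : ∀ a, prE (prE a) = a := by
    intro a
    have h1 := hprE a
    have h2 := hprE (prE a)
    have hma : (a : ℕ) < m := a.isLt
    have hmb : ((prE a) : ℕ) < m := (prE a).isLt
    apply Fin.ext
    rw [h2]
    split_ifs at h1 ⊢ <;> omega
  have hOinv : ∀ a, prO (prO a) = a := by
    intro a
    have h1 := hprO a
    have h2 := hprO (prO a)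
    have hna : (a : ℕ) < n := a.isLt
    have hnb : ((prO a) : ℕ) < n := (prO a).isLt
    apply Fin.ext
    rw [h2]
    rcases hn with hn | hn <;> split_ifs at h1 ⊢ <;> omega
  have hEinj : Function.Injective prE := Function.LeftInverse.injective hEinv
  have hOinj : Function.Injective prO := Function.LeftInverse.injective hOinv
  constructor
  · intro H
    have hpdE : ∀ i, pdE F i f = 0 := by
      intro i
      have h := HamSupAux.DH_apply_even (F := F) r prE prO hEinj i f
      rw [H] at h
      simp only [LinearMap.zero_apply] at h
      have hc : ((tau r (Sum.inl i : Fin m ⊕ Fin n) : ℤ) : F) ≠ 0 := by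
        simp only [tau, Sum.elim_inl]
        split_ifs <;> simp
      exact (smul_eq_zero.mp h.symm).resolve_left hc
    have hsupp2 : ∀ μ₀ ∈ f.support, μ₀.2 = ∅ := by
      intro μ₀ hμ₀
      by_contra hne
      obtain ⟨j, hj⟩ := Finset.nonempty_iff_ne_empty.mpr hne
      have h0 : (f.sum fun μ a => (a * (-1 : F) ^ μ.2.card) • pdO F j (X F μ)) = 0 := by
        rw [← HamSupAux.DH_apply_odd (F := F) r prE prO hOinj j f, H]
        simp
      have h1 := DFunLike.congr_fun h0 ((μ₀.1, μ₀.2.erase j) : Mono m n)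
      rw [Finsupp.sum_apply, Finsupp.sum_eq_single μ₀] at h1
      · rw [HamSupAux.pdO_X, if_pos hj] at h1
        simp only [X, Finsupp.smul_apply, Finsupp.single_eq_same,
          Finsupp.coe_zero, Pi.zero_apply, smul_eq_mul, mul_one] at h1
        rcases mul_eq_zero.mp h1 with h2 | h2
        · rcases mul_eq_zero.mp h2 with h3 | h3
          · exact absurd h3 (Finsupp.mem_support_iff.mp hμ₀)
          · exact absurd h3 (pow_ne_zero _ (neg_ne_zero.mpr one_ne_zero))
        · exact absurd h2 (pow_ne_zero _ (neg_ne_zero.mpr one_ne_zero))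
      · intro μ hμ hne'
        rw [HamSupAux.pdO_X]
        by_cases hjm : j ∈ μ.2
        · rw [if_pos hjm]
          have hne2 : ((μ.1, μ.2.erase j) : Mono m n) ≠ (μ₀.1, μ₀.2.erase j) := by
            intro hEq
            apply hne'
            obtain ⟨h1', h2⟩ := Prod.mk.inj hEq
            have h3 : μ.2 = μ₀.2 := by
              rw [← Finset.insert_erase hjm, h2, Finset.insert_erase hj]
            exact Prod.ext h1' h3
          simp [X, Finsupp.single_apply, hne2]
        · rw [if_neg hjm]
          simp
      · simp
    have hsupp1 : ∀ μ₀ ∈ f.support, μ₀.1 = 0 := by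
      intro μ₀ hμ₀
      funext i
      by_contra hne0
      simp only [Pi.zero_apply] at hne0
      have h0 : pdE F i f = 0 := hpdE i
      rw [HamSupAux.lmap_apply_sum (pdE F i) f] at h0
      have h1 := DFunLike.congr_fun h0
        ((Function.update μ₀.1 i (μ₀.1 i - 1), μ₀.2) : Mono m n)
      rw [Finsupp.sum_apply, Finsupp.sum_eq_single μ₀] at h1
      · rw [HamSupAux.pdE_X, if_neg hne0] at h1
        simp only [X, Finsupp.smul_apply, Finsupp.single_eq_same,
          Finsupp.coe_zero, Pi.zero_apply, smul_eq_mul, mul_one] at h1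
        exact absurd h1 (Finsupp.mem_support_iff.mp hμ₀)
      · intro μ hμ hne'
        rw [HamSupAux.pdE_X]
        by_cases hz : μ.1 i = 0
        · rw [if_pos hz]
          simp
        · rw [if_neg hz]
          have hne2 : ((Function.update μ.1 i (μ.1 i - 1), μ.2) : Mono m n) ≠
              (Function.update μ₀.1 i (μ₀.1 i - 1), μ₀.2) := by
            intro hEq
            apply hne'
            obtain ⟨h1', h2⟩ := Prod.mk.inj hEq
            refine Prod.ext ?_ h2
            funext k
            by_cases hk : k = i
            · subst hk
              have hki := congrFun h1' k
              simp only [Function.update_self] at hki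
              omega
            · have hki := congrFun h1' k
              simpa [Function.update_of_ne hk] using hki
          simp [X, Finsupp.single_apply, hne2]
      · simp
    refine ⟨f ((0 : Fin m → ℕ), (∅ : Finset (Fin n))), ?_⟩
    ext ν
    by_cases hν : ν = ((0 : Fin m → ℕ), (∅ : Finset (Fin n)))
    · subst hν
      simp [X, Finsupp.single_apply]
    · have hfν : f ν = 0 := by
        by_contra h
        have hmem : ν ∈ f.support := Finsupp.mem_support_iff.mpr h
        exact hν (Prod.ext (hsupp1 ν hmem) (hsupp2 ν hmem))
      have hνne : ((0 : Fin m → ℕ), (∅ : Finset (Fin n))) ≠ ν := fun h => hν h.symm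
      simp [X, Finsupp.single_apply, hfν, hνne]
  · rintro ⟨c, rfl⟩
    rw [map_smul, HamSupAux.DH_X]
    have hz : DHmono F r (Sum.map prE prO) ((0 : Fin m → ℕ), (∅ : Finset (Fin n))) = 0 := by
      rw [DHmono]
      refine Finset.sum_eq_zero fun k _ => ?_
      have hk : pd F k (X F ((0 : Fin m → ℕ), (∅ : Finset (Fin n)))) = 0 := by
        cases k with
        | inl a =>
            show pdE F a _ = 0
            rw [HamSupAux.pdE_X]
            simp
        | inr b =>
            show pdO F b _ = 0
            rw [HamSupAux.pdO_X]
            simp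
      rw [hk, map_zero, LinearMap.zero_comp, smul_zero]
    rw [hz, smul_zero]
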